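/- Let K ⊆ H ⊆ G be groups with involution setup as in the paper, and let A = (TH_{x,0})_θ/(TH_{x,0})^θ be the abelian quotient (embedded in Z(G) via g ↦ gθ(g)⁻¹), B ⊆ A the image of (h⁻¹TH_{x,0+}h)_θ. Then the number of double cosets (TH_{x,0+})hk(TH_{x,0})^θ as k ranges over (TH_{x,0})_θ equals the index [A : B], and [A : B] = [hAh⁻¹ : hBh⁻¹] = m_{TH_{x,0+}}^{TH_{x,0}}(h·θ). Abstractly: let C be a group, N a subgroup, D = C_θ, F = C^θ ⊴-type subgroup with D/F abelian, and let B ⊆ D/F be the image of (h⁻¹Nh)_θ; then the double cosets N h k F for k ∈ D are in bijection with (D/F)/B, of cardinality [D/F : B]. -/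

import Mathlib

namespace Stmt19

variable {G : Type*} [Group G]

/-- The action of `g` on automorphisms: `(g · θ)(h) = g θ(g⁻¹ h g) g⁻¹`. -/
def conjAct (g : G) (θ : MulAut G) : MulAut G := MulAut.conj g * θ * (MulAut.conj g)⁻¹

/-- The fixed points `G^θ` of `θ`, as a subgroup. -/
def fixedSub (θ : MulAut G) : Subgroup G where
  carrier := {g | θ g = g}
  one_mem' := map_one θ
  mul_mem' := by
    intro a b ha hb
    simp only [Set.mem_setOf_eq, map_mul] at *
    rw [ha, hb]
  inv_mem' := by
    intro a ha
    simp only [Set.mem_setOf_eq, map_inv] at *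
    rw [ha]

/-- The stabilizer `G_θ = {g : g · θ = θ}` of `θ` under the conjugation action. -/
def stabSub (θ : MulAut G) : Subgroup G where
  carrier := {g | conjAct g θ = θ}
  one_mem' := by simp [conjAct]
  mul_mem' := by
    intro a b ha hb
    simp only [Set.mem_setOf_eq, conjAct, map_mul, mul_inv_rev] at *
    calc MulAut.conj a * MulAut.conj b * θ * ((MulAut.conj b)⁻¹ * (MulAut.conj a)⁻¹)
        = MulAut.conj a * (MulAut.conj b * θ * (MulAut.conj b)⁻¹) * (MulAut.conj a)⁻¹ := by
          group
      _ = θ := by rw [hb]; exact ha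
  inv_mem' := by
    intro a ha
    simp only [Set.mem_setOf_eq, conjAct, map_inv, inv_inv] at *
    rw [mul_inv_eq_iff_eq_mul] at ha
    rw [mul_assoc, ← ha, inv_mul_cancel_left]


/-- The twisted stabilizer `G_θ = {g : g θ(g)⁻¹ ∈ Z(G)}` of `θ`. -/
def stabZ (θ : MulAut G) : Subgroup G where
  carrier := {g | g * (θ g)⁻¹ ∈ Subgroup.center G}
  one_mem' := by
    simp only [Set.mem_setOf_eq, map_one, inv_one, mul_one]
    exact Subgroup.one_mem _
  mul_mem' := by
    intro a b ha hb
    simp only [Set.mem_setOf_eq, map_mul, mul_inv_rev] at *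
    have hz := Subgroup.mem_center_iff.mp hb
    have h1 : a * b * ((θ b)⁻¹ * (θ a)⁻¹) = a * (b * (θ b)⁻¹) * (θ a)⁻¹ := by group
    have h2 : a * (b * (θ b)⁻¹) * (θ a)⁻¹ = (b * (θ b)⁻¹) * (a * (θ a)⁻¹) := by
      calc a * (b * (θ b)⁻¹) * (θ a)⁻¹ = (b * (θ b)⁻¹) * a * (θ a)⁻¹ := by rw [hz a]
        _ = (b * (θ b)⁻¹) * (a * (θ a)⁻¹) := by group
    rw [h1, h2]
    exact Subgroup.mul_mem _ hb ha
  inv_mem' := by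
    intro a ha
    simp only [Set.mem_setOf_eq, map_inv, inv_inv] at *
    have hz : (θ a) * a⁻¹ ∈ Subgroup.center G := by
      have h := Subgroup.inv_mem _ ha
      simpa using h
    have hc := Subgroup.mem_center_iff.mp hz
    have heq : a⁻¹ * θ a = θ a * a⁻¹ := by
      have h3 := hc a⁻¹
      calc a⁻¹ * θ a = a⁻¹ * (θ a * a⁻¹) * a := by group
        _ = (θ a * a⁻¹) * a⁻¹ * a := by rw [h3]
        _ = θ a * a⁻¹ := by group
    rw [heq]
    exact hz



section Lemmas

variable {G : Type*} [Group G]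

lemma central_comm_aux {z w a b : G}
    (hz : ∀ g : G, g * z = z * g) (hw : ∀ g : G, g * w = w * g) :
    (z⁻¹ * a) * (w⁻¹ * b) * (z⁻¹ * a)⁻¹ * (w⁻¹ * b)⁻¹ = a * b * a⁻¹ * b⁻¹ := by
  have Cz : ∀ g : G, Commute z g := fun g => (hz g).symm
  have Cw : ∀ g : G, Commute w g := fun g => (hw g).symm
  calc (z⁻¹ * a) * (w⁻¹ * b) * (z⁻¹ * a)⁻¹ * (w⁻¹ * b)⁻¹
      = z⁻¹ * (a * w⁻¹) * ((b * a⁻¹) * z * (b⁻¹ * w)) := by group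
    _ = z⁻¹ * (w⁻¹ * a) * ((b * a⁻¹) * z * (b⁻¹ * w)) := by
        rw [((Cw a).inv_left).eq]
    _ = (z⁻¹ * w⁻¹) * ((a * b * a⁻¹) * z) * (b⁻¹ * w) := by group
    _ = (z⁻¹ * w⁻¹) * (z * (a * b * a⁻¹)) * (b⁻¹ * w) := by rw [hz (a * b * a⁻¹)]
    _ = (z⁻¹ * (w⁻¹ * z)) * ((a * b * a⁻¹ * b⁻¹) * w) := by group
    _ = (z⁻¹ * (z * w⁻¹)) * ((a * b * a⁻¹ * b⁻¹) * w) := by rw [(Cz w⁻¹).eq]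
    _ = w⁻¹ * (w * (a * b * a⁻¹ * b⁻¹)) := by rw [hw (a * b * a⁻¹ * b⁻¹)]; group
    _ = a * b * a⁻¹ * b⁻¹ := by group

lemma mem_fixedSub_iff {θ : MulAut G} {g : G} : g ∈ fixedSub θ ↔ θ g = g := Iff.rfl

lemma mem_stabZ_iff {θ : MulAut G} {g : G} :
    g ∈ stabZ θ ↔ g * (θ g)⁻¹ ∈ Subgroup.center G := Iff.rfl

lemma fixedSub_le_stabZ (θ : MulAut G) : fixedSub θ ≤ stabZ θ := by
  intro g hg
  have hfix : θ g = g := hg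
  rw [mem_stabZ_iff, hfix, mul_inv_cancel]
  exact Subgroup.one_mem _

lemma theta_apply_of_mem_stabZ {θ : MulAut G} {d : G} (_ : d ∈ stabZ θ) :
    θ d = (d * (θ d)⁻¹)⁻¹ * d := by group

lemma comm_mem_fixedSub {θ : MulAut G} {a b : G} (ha : a ∈ stabZ θ) (hb : b ∈ stabZ θ) :
    a * b * a⁻¹ * b⁻¹ ∈ fixedSub θ := by
  have hza : ∀ g : G, g * (a * (θ a)⁻¹) = (a * (θ a)⁻¹) * g := Subgroup.mem_center_iff.mp ha
  have hzb : ∀ g : G, g * (b * (θ b)⁻¹) = (b * (θ b)⁻¹) * g := Subgroup.mem_center_iff.mp hb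
  have hta : θ a = (a * (θ a)⁻¹)⁻¹ * a := by group
  have htb : θ b = (b * (θ b)⁻¹)⁻¹ * b := by group
  rw [mem_fixedSub_iff, map_mul, map_mul, map_mul, map_inv, map_inv, hta, htb]
  exact central_comm_aux hza hzb

lemma conj_mem_fixedSub {θ : MulAut G} {d f : G} (hd : d ∈ stabZ θ) (hf : f ∈ fixedSub θ) :
    d * f * d⁻¹ ∈ fixedSub θ := by
  have hz : ∀ g : G, g * (d * (θ d)⁻¹) = (d * (θ d)⁻¹) * g := Subgroup.mem_center_iff.mp hd
  have hfix : θ f = f := hf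
  have htd : θ d = (d * (θ d)⁻¹)⁻¹ * d := by group
  rw [mem_fixedSub_iff, map_mul, map_mul, map_inv, hfix, htd]
  set z := d * (θ d)⁻¹ with hzdef
  calc z⁻¹ * d * f * (z⁻¹ * d)⁻¹ = z⁻¹ * ((d * f * d⁻¹) * z) := by group
    _ = z⁻¹ * (z * (d * f * d⁻¹)) := by rw [hz (d * f * d⁻¹)]
    _ = d * f * d⁻¹ := by group

/-- Description of the join `M ⊔ F` when `M ≤ stabZ θ` and `F = fixedSub θ`. -/
lemma mem_sup_iff {θ : MulAut G} {M : Subgroup G} (hM : M ≤ stabZ θ) {x : G} :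
    x ∈ M ⊔ fixedSub θ ↔ ∃ m ∈ M, ∃ f ∈ fixedSub θ, x = m * f := by
  constructor
  · intro hx
    let K : Subgroup G :=
      { carrier := {x | ∃ m ∈ M, ∃ f ∈ fixedSub θ, x = m * f}
        one_mem' := ⟨1, M.one_mem, 1, (fixedSub θ).one_mem, by simp⟩
        mul_mem' := by
          rintro a b ⟨m, hm, f, hf, rfl⟩ ⟨m', hm', f', hf', rfl⟩
          refine ⟨m * m', M.mul_mem hm hm', (m'⁻¹ * f * m') * f',
            (fixedSub θ).mul_mem ?_ hf', by group⟩
          have := conj_mem_fixedSub (θ := θ) ((stabZ θ).inv_mem (hM hm')) hf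
          simpa using this
        inv_mem' := by
          rintro a ⟨m, hm, f, hf, rfl⟩
          refine ⟨m⁻¹, M.inv_mem hm, m * f⁻¹ * m⁻¹,
            conj_mem_fixedSub (hM hm) ((fixedSub θ).inv_mem hf), by group⟩ }
    have hle : M ⊔ fixedSub θ ≤ K := by
      apply sup_le
      · intro m hm; exact ⟨m, hm, 1, (fixedSub θ).one_mem, by simp⟩
      · intro f hf; exact ⟨1, M.one_mem, f, hf, by simp⟩
    exact hle hx
  · rintro ⟨m, hm, f, hf, rfl⟩
    exact Subgroup.mul_mem _ (Subgroup.mem_sup_left hm) (Subgroup.mem_sup_right hf)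

lemma conjAct_apply (h : G) (θ : MulAut G) (g : G) :
    conjAct h θ g = h * θ (h⁻¹ * g * h) * h⁻¹ := by
  show (MulAut.conj h * θ * (MulAut.conj h)⁻¹) g = _
  rw [← map_inv MulAut.conj h]
  simp [MulAut.mul_apply, MulAut.conj_apply, mul_assoc]

lemma conj_mem_center {z : G} (hz : z ∈ Subgroup.center G) (h : G) :
    h * z * h⁻¹ ∈ Subgroup.center G := by
  rw [Subgroup.mem_center_iff] at *
  intro g
  have hh := hz (h⁻¹ * g * h)
  calc g * (h * z * h⁻¹) = h * ((h⁻¹ * g * h) * z) * h⁻¹ := by group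
    _ = h * (z * (h⁻¹ * g * h)) * h⁻¹ := by rw [hh]
    _ = (h * z * h⁻¹) * g := by group

lemma conj_mem_center_iff {z : G} (h : G) :
    h * z * h⁻¹ ∈ Subgroup.center G ↔ z ∈ Subgroup.center G := by
  constructor
  · intro hz
    have := conj_mem_center hz h⁻¹
    have heq : h⁻¹ * (h * z * h⁻¹) * h⁻¹⁻¹ = z := by group
    rwa [heq] at this
  · intro hz
    exact conj_mem_center hz h

lemma stabZ_conjAct (h : G) (θ : MulAut G) :
    stabZ (conjAct h θ) = (stabZ θ).map (MulAut.conj h).toMonoidHom := by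
  have key : ∀ g : G, g ∈ stabZ (conjAct h θ) ↔ h⁻¹ * g * h ∈ stabZ θ := by
    intro g
    rw [mem_stabZ_iff, mem_stabZ_iff, conjAct_apply]
    have heq : g * (h * θ (h⁻¹ * g * h) * h⁻¹)⁻¹
        = h * ((h⁻¹ * g * h) * (θ (h⁻¹ * g * h))⁻¹) * h⁻¹ := by group
    rw [heq, conj_mem_center_iff]
  ext g
  rw [key, Subgroup.mem_map]
  constructor
  · intro hg
    exact ⟨h⁻¹ * g * h, hg, by simp [MulAut.conj]; group⟩
  · rintro ⟨d, hd, rfl⟩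
    simpa [MulAut.conj, mul_assoc] using hd

lemma fixedSub_conjAct (h : G) (θ : MulAut G) :
    fixedSub (conjAct h θ) = (fixedSub θ).map (MulAut.conj h).toMonoidHom := by
  ext g
  rw [Subgroup.mem_map]
  constructor
  · intro hg
    have hfix : h * θ (h⁻¹ * g * h) * h⁻¹ = g := by
      have := (mem_fixedSub_iff).mp hg
      rwa [conjAct_apply] at this
    refine ⟨h⁻¹ * g * h, ?_, by simp [MulAut.conj]; group⟩
    rw [mem_fixedSub_iff]
    calc θ (h⁻¹ * g * h) = h⁻¹ * (h * θ (h⁻¹ * g * h) * h⁻¹) * h := by group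
      _ = h⁻¹ * g * h := by rw [hfix]
  · rintro ⟨f, hf, rfl⟩
    have hfix : θ f = f := hf
    rw [mem_fixedSub_iff, conjAct_apply]
    simp [MulAut.conj, mul_assoc, hfix]

lemma conj_comp_conj_inv (h : G) :
    (MulAut.conj h).toMonoidHom.comp (MulAut.conj h⁻¹).toMonoidHom = MonoidHom.id G := by
  ext x
  simp [MulAut.conj]
  group

end Lemmas

/-- Abstract double-coset count: let `C` be a group, `θ` an involution of `C`,
`D = C_θ = {c : c θ(c)⁻¹ ∈ Z(C)}`, `F = C^θ`, `N` a subgroup and `h ∈ C`.  The number of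
double cosets `N (h k) F` as `k` ranges over `D` equals the index
`[D : (h⁻¹Nh)_θ F]` (which is `[D/F : B]` for `B` the image of `(h⁻¹Nh)_θ` in the
abelian group `D/F`), and this index equals
`m_N^C(h·θ) = [C_{h·θ} : N_{h·θ} C^{h·θ}]`. -/
theorem double_coset_count (θ : MulAut G) (hθ : θ * θ = 1)
    (N : Subgroup G) (h : G)
    (hfin : ((stabZ θ ⊓ N.map (MulAut.conj h⁻¹).toMonoidHom) ⊔ fixedSub θ).relIndex
        (stabZ θ) ≠ 0) :
    Nat.card {s : Set G // ∃ k ∈ stabZ θ,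
        s = {x : G | ∃ n ∈ N, ∃ f ∈ fixedSub θ, x = n * (h * k) * f}}
      = ((stabZ θ ⊓ N.map (MulAut.conj h⁻¹).toMonoidHom) ⊔ fixedSub θ).relIndex
          (stabZ θ) ∧
    ((stabZ θ ⊓ N.map (MulAut.conj h⁻¹).toMonoidHom) ⊔ fixedSub θ).relIndex (stabZ θ)
      = ((stabZ (conjAct h θ) ⊓ N) ⊔ fixedSub (conjAct h θ)).relIndex
          (stabZ (conjAct h θ)) := by
  classical
  set F : Subgroup G := fixedSub θ with hFdef
  set M : Subgroup G := stabZ θ ⊓ N.map (MulAut.conj h⁻¹).toMonoidHom with hMdef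
  set J : Subgroup G := M ⊔ F with hJdef
  have hMle : M ≤ stabZ θ := inf_le_left
  have hFle : F ≤ stabZ θ := fixedSub_le_stabZ θ
  -- Description of the double coset sets as `Doset.doset`
  have hset : ∀ g : G, {x : G | ∃ n ∈ N, ∃ f ∈ fixedSub θ, x = n * g * f}
      = DoubleCoset.doubleCoset g ↑N ↑F := by
    intro g
    ext x
    simp only [Set.mem_setOf_eq, DoubleCoset.mem_doubleCoset, SetLike.mem_coe]
    exact Iff.rfl
  -- Key equivalence
  have key : ∀ k k' : G, k ∈ stabZ θ → k' ∈ stabZ θ →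
      ((DoubleCoset.doubleCoset (h * k') ↑N ↑F = DoubleCoset.doubleCoset (h * k) ↑N ↑F) ↔ k⁻¹ * k' ∈ J) := by
    intro k k' hk hk'
    constructor
    · intro hEq
      have hmem : h * k' ∈ DoubleCoset.doubleCoset (h * k) ↑N ↑F := by
        rw [← hEq]; exact DoubleCoset.mem_doubleCoset_self N F (h * k')
      obtain ⟨n, hn, f, hf, heq⟩ := DoubleCoset.mem_doubleCoset.mp hmem
      set m : G := k' * f⁻¹ * k⁻¹ with hmdef
      have hmD : m ∈ stabZ θ :=
        (stabZ θ).mul_mem ((stabZ θ).mul_mem hk' ((stabZ θ).inv_mem (hFle hf)))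
          ((stabZ θ).inv_mem hk)
      have hn' : h * m * h⁻¹ = n := by
        have e1 : h * m * h⁻¹ = (h * k') * (f⁻¹ * k⁻¹ * h⁻¹) := by rw [hmdef]; group
        rw [e1, heq]; group
      have hmN : m ∈ N.map (MulAut.conj h⁻¹).toMonoidHom := by
        refine ⟨n, hn, ?_⟩
        show MulAut.conj h⁻¹ n = m
        rw [MulAut.conj_apply, ← hn']
        group
      have hmM : m ∈ M := ⟨hmD, hmN⟩
      rw [mem_sup_iff hMle]
      refine ⟨m, hmM, (m⁻¹ * k⁻¹ * m * k) * f, F.mul_mem ?_ hf, ?_⟩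
      · have := comm_mem_fixedSub ((stabZ θ).inv_mem hmD) ((stabZ θ).inv_mem hk)
        simpa using this
      · rw [hmdef]; group
    · intro hx
      rw [mem_sup_iff hMle] at hx
      obtain ⟨m, hmM, f, hf, heq⟩ := hx
      have hmD : m ∈ stabZ θ := hMle hmM
      obtain ⟨n, hn, hcn⟩ := hmM.2
      have hn2 : h * m * h⁻¹ = n := by
        have : MulAut.conj h⁻¹ n = m := hcn
        rw [MulAut.conj_apply] at this
        rw [← this]
        group
      have hk'eq : k' = k * (m * f) := by
        have : k * (k⁻¹ * k') = k * (m * f) := by rw [heq]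
        rwa [← mul_assoc, mul_inv_cancel, one_mul] at this
      have hc : m⁻¹ * k * m * k⁻¹ ∈ F := by
        have := comm_mem_fixedSub ((stabZ θ).inv_mem hmD) hk
        simpa using this
      have hc2 : k⁻¹ * (m⁻¹ * k * m * k⁻¹) * k ∈ F := by
        have := conj_mem_fixedSub ((stabZ θ).inv_mem hk) hc
        simpa using this
      apply DoubleCoset.doubleCoset_eq_of_mem
      apply DoubleCoset.mem_doubleCoset.mpr
      refine ⟨n, hn, (k⁻¹ * (m⁻¹ * k * m * k⁻¹) * k) * f, F.mul_mem hc2 hf, ?_⟩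
      rw [hk'eq, ← hn2]
      group
  constructor
  · -- the counting statement
    set T := {s : Set G // ∃ k ∈ stabZ θ,
        s = {x : G | ∃ n ∈ N, ∃ f ∈ fixedSub θ, x = n * (h * k) * f}} with hTdef
    let toT : (stabZ θ) → T := fun k =>
      ⟨{x : G | ∃ n ∈ N, ∃ f ∈ fixedSub θ, x = n * (h * (k : G)) * f}, ⟨(k : G), k.2, rfl⟩⟩
    have toT_eq_iff : ∀ a b : (stabZ θ), toT a = toT b ↔ (a : G)⁻¹ * b ∈ J := by
      intro a b
      constructor
      · intro hab
        have : {x : G | ∃ n ∈ N, ∃ f ∈ fixedSub θ, x = n * (h * (a : G)) * f}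
            = {x : G | ∃ n ∈ N, ∃ f ∈ fixedSub θ, x = n * (h * (b : G)) * f} :=
          congrArg Subtype.val hab
        rw [hset, hset] at this
        have h1 : ((b : G))⁻¹ * (a : G) ∈ J := (key (b : G) (a : G) b.2 a.2).mp this
        have h2 := J.inv_mem h1
        simpa using h2
      · intro hab
        have h1 : ((a : G))⁻¹ * (b : G) ∈ J := hab
        have h2 : DoubleCoset.doubleCoset (h * (b : G)) ↑N ↑F = DoubleCoset.doubleCoset (h * (a : G)) ↑N ↑F :=
          (key (a : G) (b : G) a.2 b.2).mpr h1
        apply Subtype.ext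
        show {x : G | ∃ n ∈ N, ∃ f ∈ fixedSub θ, x = n * (h * (a : G)) * f}
            = {x : G | ∃ n ∈ N, ∃ f ∈ fixedSub θ, x = n * (h * (b : G)) * f}
        rw [hset, hset]
        exact h2.symm
    let φ : (stabZ θ) ⧸ (J.subgroupOf (stabZ θ)) → T :=
      Quotient.lift toT (by
        intro a b hab
        have hab' : a⁻¹ * b ∈ J.subgroupOf (stabZ θ) := QuotientGroup.leftRel_apply.mp hab
        have : (a : G)⁻¹ * (b : G) ∈ J := by
          have := Subgroup.mem_subgroupOf.mp hab'
          simpa using this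
        exact (toT_eq_iff a b).mpr this)
    have hbij : Function.Bijective φ := by
      constructor
      · intro x y
        induction x using Quotient.ind
        induction y using Quotient.ind
        rename_i a b
        intro hab
        apply Quotient.sound
        apply QuotientGroup.leftRel_apply.mpr
        apply Subgroup.mem_subgroupOf.mpr
        have : toT a = toT b := hab
        have h1 := (toT_eq_iff a b).mp this
        simpa using h1
      · rintro ⟨s, k, hk, rfl⟩
        exact ⟨Quotient.mk _ ⟨k, hk⟩, rfl⟩
    have hcard : Nat.card T = Nat.card ((stabZ θ) ⧸ (J.subgroupOf (stabZ θ))) :=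
      (Nat.card_congr (Equiv.ofBijective φ hbij)).symm
    rw [hcard]
    rfl
  · -- conjugation invariance
    set c : G →* G := (MulAut.conj h).toMonoidHom with hcdef
    have hinj : Function.Injective c := (MulAut.conj h).injective
    have e1 : J.relIndex (stabZ θ) = (J.map c).relIndex ((stabZ θ).map c) := by
      conv_lhs => rw [← Subgroup.comap_map_eq_self_of_injective hinj J]
      rw [Subgroup.relIndex_comap]
    have e2 : J.map c = (stabZ (conjAct h θ) ⊓ N) ⊔ fixedSub (conjAct h θ) := by
      rw [hJdef, Subgroup.map_sup, hMdef, Subgroup.map_inf _ _ _ hinj, hFdef,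
        ← stabZ_conjAct, ← fixedSub_conjAct, Subgroup.map_map, conj_comp_conj_inv,
        Subgroup.map_id]
    rw [e1, e2, ← stabZ_conjAct]


end Stmt19
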